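/- For the simple symmetric random walk on ℤ and x ≠ 0, y ∈ ℤ, the Green function of the walk killed just before its first positive hitting time of 0 is G_0(x,y) = 2·min(|x|,|y|)·1_{xy>0}, and G_0(0,y) = 1 for all y ∈ ℤ. -/

import Mathlib

open MeasureTheory ENNReal
open scoped Classical NNReal

/-- A (time-homogeneous) Markov chain on a state space `E`, given by its
transition probabilities `p` and the family of path-space laws `P x` (the chain started
at `x`), characterized by its finite-dimensional distributions. -/
structure MC (E : Type*) [MeasurableSpace E] where
  p : E → E → ℝ≥0∞
  P : E → Measure (ℕ → E)
  prob : ∀ x, IsProbabilityMeasure (P x)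
  stochastic : ∀ x, ∑' y, p x y = 1
  fdd : ∀ (x : E) (n : ℕ) (xs : Fin (n + 1) → E),
    P x {ω | ∀ i : Fin (n + 1), ω i = xs i}
      = (if xs 0 = x then 1 else 0) * ∏ i : Fin n, p (xs i.castSucc) (xs i.succ)

/-- Irreducibility: every state is reachable from every state with positive probability. -/
def MC.Irreducible {E : Type*} [MeasurableSpace E] (M : MC E) : Prop :=
  ∀ x y : E, ∃ n : ℕ, 0 < M.P x {ω | ω n = y}

/-- Recurrence: started from any state, the chain returns to that state infinitely often
almost surely. -/
def MC.Recurrent {E : Type*} [MeasurableSpace E] (M : MC E) : Prop :=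
  ∀ x : E, M.P x {ω | ∀ N : ℕ, ∃ n, N ≤ n ∧ ω n = x} = 1

/-- Green function of the chain killed just before the first return time `T'_{x0}`:
`G_{x0}(x,y) = E_x[L^y_{T'_{x0} - 1}]`, the expected number of visits to `y` at times `n`
such that `x0` has not been visited at any time `1 ≤ k ≤ n`. -/
noncomputable def MC.green {E : Type*} [MeasurableSpace E] (M : MC E) (x0 x y : E) : ℝ≥0∞ :=
  ∫⁻ ω, (∑' n : ℕ, if ω n = y ∧ ∀ k, 1 ≤ k → k ≤ n → ω k ≠ x0 then (1 : ℝ≥0∞) else 0) ∂ M.P x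

/-- Transition probabilities of the simple symmetric random walk on `ℤ`. -/
noncomputable def srwZ : ℤ → ℤ → ℝ≥0∞ := fun x y =>
  if y = x + 1 ∨ y = x - 1 then (1 : ℝ≥0∞) / 2 else 0

noncomputable def wgt (M : MC ℤ) (x : ℤ) {n : ℕ} (xs : Fin (n+1) → ℤ) : ℝ≥0∞ :=
  (if xs 0 = x then 1 else 0) * ∏ i : Fin n, M.p (xs i.castSucc) (xs i.succ)

lemma measure_det (M : MC ℤ) (x : ℤ) (n : ℕ) (Q : (Fin (n+1) → ℤ) → Prop) :
    M.P x {ω | Q (fun i => ω i)} = ∑' xs : Fin (n+1) → ℤ, if Q xs then wgt M x xs else 0 := by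
  have hset : {ω : ℕ → ℤ | Q (fun i => ω i)}
      = ⋃ xs : {xs : Fin (n+1) → ℤ // Q xs}, {ω : ℕ → ℤ | ∀ i : Fin (n+1), ω i = xs.1 i} := by
    ext ω
    simp only [Set.mem_setOf_eq, Set.mem_iUnion]
    constructor
    · intro h
      exact ⟨⟨fun i => ω i, h⟩, fun i => rfl⟩
    · rintro ⟨xs, hxs⟩
      have : (fun i : Fin (n+1) => ω i) = xs.1 := funext hxs
      rw [this]; exact xs.2
  rw [hset, measure_iUnion]
  · rw [show (∑' xs : Fin (n+1) → ℤ, if Q xs then wgt M x xs else 0)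
        = ∑' xs : Fin (n+1) → ℤ, Set.indicator {xs | Q xs} (wgt M x) xs from by
      congr 1]
    rw [← tsum_subtype]
    congr 1
    funext xs
    rw [wgt]
    rw [M.fdd x n xs.1]
    congr 1
    simp
  · -- pairwise disjoint
    rintro ⟨xs, hxs⟩ ⟨ys, hys⟩ hne
    simp only [Function.onFun]
    apply Set.disjoint_left.mpr
    intro ω hω hω'
    apply hne
    apply Subtype.ext
    funext i
    have h1 := hω i
    have h2 := hω' i
    show xs i = ys i
    rw [← h1, ← h2]
  · intro xs
    have : {ω : ℕ → ℤ | ∀ i : Fin (n+1), ω i = xs.1 i}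
        = ⋂ i : Fin (n+1), (fun ω : ℕ → ℤ => ω i) ⁻¹' {xs.1 i} := by
      ext ω; simp [Set.mem_iInter]
    rw [this]
    exact MeasurableSet.iInter fun i => (measurable_pi_apply _) (measurableSet_singleton _)

def Aset (n : ℕ) (y : ℤ) : Set (ℕ → ℤ) := {ω | ω n = y ∧ ∀ k, 1 ≤ k → k ≤ n → ω k ≠ 0}

def QQ (n : ℕ) (y : ℤ) (xs : Fin (n+1) → ℤ) : Prop :=
  xs (Fin.last n) = y ∧ ∀ k : Fin (n+1), 1 ≤ (k : ℕ) → xs k ≠ 0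

noncomputable def gg (M : MC ℤ) (x : ℤ) (n : ℕ) (y : ℤ) : ℝ≥0∞ := M.P x (Aset n y)

lemma Aset_eq (n : ℕ) (y : ℤ) : Aset n y = {ω : ℕ → ℤ | QQ n y (fun i => ω i)} := by
  ext ω
  simp only [Aset, QQ, Set.mem_setOf_eq, Fin.val_last]
  constructor
  · rintro ⟨h1, h2⟩
    exact ⟨h1, fun k hk => h2 k hk (Nat.lt_succ_iff.mp k.isLt)⟩
  · rintro ⟨h1, h2⟩
    exact ⟨h1, fun k hk hkn => h2 ⟨k, Nat.lt_succ_of_le hkn⟩ hk⟩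

lemma Aset_meas (n : ℕ) (y : ℤ) : MeasurableSet (Aset n y) := by
  have : Aset n y = (fun ω : ℕ → ℤ => ω n) ⁻¹' {y} ∩ ⋂ k : ℕ, {ω | 1 ≤ k → k ≤ n → ω k ≠ 0} := by
    ext ω; simp [Aset, Set.mem_iInter]
  rw [this]
  apply MeasurableSet.inter
  · exact (measurable_pi_apply n) (measurableSet_singleton y)
  · apply MeasurableSet.iInter
    intro k
    by_cases h : 1 ≤ k ∧ k ≤ n
    · have : {ω : ℕ → ℤ | 1 ≤ k → k ≤ n → ω k ≠ 0} = (fun ω : ℕ → ℤ => ω k) ⁻¹' ({0}ᶜ) := by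
        ext ω; simp [h.1, h.2]
      rw [this]
      exact (measurable_pi_apply k) (measurableSet_singleton 0).compl
    · have : {ω : ℕ → ℤ | 1 ≤ k → k ≤ n → ω k ≠ 0} = Set.univ := by
        ext ω
        simp only [Set.mem_setOf_eq, Set.mem_univ, iff_true]
        intro h1 h2; exact absurd ⟨h1, h2⟩ h
      rw [this]; exact MeasurableSet.univ

lemma gg_eq (M : MC ℤ) (x : ℤ) (n : ℕ) (y : ℤ) :
    gg M x n y = ∑' xs : Fin (n+1) → ℤ, if QQ n y xs then wgt M x xs else 0 := by
  rw [gg, Aset_eq, measure_det]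

lemma green_eq (M : MC ℤ) (x y : ℤ) : M.green 0 x y = ∑' n, gg M x n y := by
  rw [MC.green]
  refine Eq.trans (lintegral_congr
      (g := fun ω => ∑' n : ℕ, Set.indicator (Aset n y) (1 : (ℕ → ℤ) → ℝ≥0∞) ω)
      fun ω => tsum_congr fun n => ?_) ?_
  · rw [Set.indicator_apply, Pi.one_apply]
    by_cases h : ω ∈ Aset n y
    · rw [if_pos h, if_pos]; exact h
    · rw [if_neg h, if_neg]; exact h
  · rw [lintegral_tsum fun n => (measurable_one.indicator (Aset_meas n y)).aemeasurable]
    congr 1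
    funext n
    rw [lintegral_indicator_one (Aset_meas n y)]
    rfl

lemma gg_zero (M : MC ℤ) (x : ℤ) (n : ℕ) (hn : 1 ≤ n) : gg M x n 0 = 0 := by
  have : Aset n 0 = ∅ := by
    ext ω
    simp only [Aset, Set.mem_setOf_eq, Set.mem_empty_iff_false, iff_false, not_and]
    intro h1 h2
    exact h2 n hn le_rfl h1
  rw [gg, this, measure_empty]

lemma gg_init (M : MC ℤ) (x y : ℤ) : gg M x 0 y = if y = x then 1 else 0 := by
  have : Aset 0 y = {ω : ℕ → ℤ | ∀ i : Fin 1, ω i = ![y] i} := by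
    ext ω
    simp only [Aset, Set.mem_setOf_eq]
    constructor
    · rintro ⟨h1, -⟩ i
      have : i = 0 := Subsingleton.elim _ _
      rw [this]; exact h1
    · intro h
      refine ⟨h 0, fun k hk hk0 => absurd (hk.trans hk0) (by norm_num)⟩
  rw [gg, this, M.fdd x 0 ![y]]
  simp [Matrix.cons_val_zero]

def snocE (n : ℕ) : ((Fin (n+1) → ℤ) × ℤ) ≃ (Fin (n+2) → ℤ) where
  toFun p := Fin.snoc p.1 p.2
  invFun xs := (Fin.init xs, xs (Fin.last (n+1)))
  left_inv p := by simp [Fin.init_snoc, Fin.snoc_last]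
  right_inv xs := by simp [Fin.snoc_init_self]

lemma wgt_snoc (M : MC ℤ) (x : ℤ) (n : ℕ) (xs : Fin (n+1) → ℤ) (z : ℤ) :
    wgt M x (Fin.snoc xs z) = wgt M x xs * M.p (xs (Fin.last n)) z := by
  rw [wgt, wgt, Fin.prod_univ_castSucc]
  have h0 : (Fin.snoc xs z : Fin (n+2) → ℤ) 0 = xs 0 := by
    rw [show (0 : Fin (n+2)) = Fin.castSucc 0 by rfl, Fin.snoc_castSucc]
  rw [h0, mul_assoc]
  congr 1
  congr 1
  · apply Finset.prod_congr rfl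
    intro i _
    rw [Fin.snoc_castSucc, Fin.succ_castSucc, Fin.snoc_castSucc]
  · rw [Fin.succ_last, Fin.snoc_last, Fin.snoc_castSucc]

lemma gg_rec (M : MC ℤ) (x : ℤ) (n : ℕ) (y : ℤ) (hy : y ≠ 0) :
    gg M x (n+1) y = ∑' z : ℤ, gg M x n z * M.p z y := by
  have hQ : ∀ (xs : Fin (n+1) → ℤ) (z : ℤ), QQ (n+1) y (Fin.snoc xs z)
      ↔ (z = y ∧ ∀ k : Fin (n+1), 1 ≤ (k:ℕ) → xs k ≠ 0) := by
    intro xs z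
    unfold QQ
    rw [Fin.snoc_last]
    constructor
    · rintro ⟨h1, h2⟩
      refine ⟨h1, fun k hk => ?_⟩
      have := h2 k.castSucc (by simpa using hk)
      rwa [Fin.snoc_castSucc] at this
    · rintro ⟨h1, h2⟩
      refine ⟨h1, fun k => ?_⟩
      induction k using Fin.lastCases with
      | last => intro _; rw [Fin.snoc_last, h1]; exact hy
      | cast j => intro hj; rw [Fin.snoc_castSucc]; exact h2 j (by simpa using hj)
  calc gg M x (n+1) y
      = ∑' xs : Fin (n+2) → ℤ, if QQ (n+1) y xs then wgt M x xs else 0 := gg_eq M x (n+1) y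
    _ = ∑' p : (Fin (n+1) → ℤ) × ℤ,
          (if QQ (n+1) y (Fin.snoc p.1 p.2) then wgt M x (Fin.snoc p.1 p.2) else 0) :=
        ((snocE n).tsum_eq _).symm
    _ = ∑' (xs : Fin (n+1) → ℤ) (z : ℤ),
          (if QQ (n+1) y (Fin.snoc xs z) then wgt M x (Fin.snoc xs z) else 0) :=
        ENNReal.tsum_prod'
    _ = ∑' (xs : Fin (n+1) → ℤ),
          (if (∀ k : Fin (n+1), 1 ≤ (k:ℕ) → xs k ≠ 0)
            then wgt M x xs * M.p (xs (Fin.last n)) y else 0) := by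
        apply tsum_congr
        intro xs
        by_cases hR : ∀ k : Fin (n+1), 1 ≤ (k:ℕ) → xs k ≠ 0
        · rw [if_pos hR]
          rw [show (∑' (z : ℤ), if QQ (n+1) y (Fin.snoc xs z) then wgt M x (Fin.snoc xs z) else 0)
              = ∑' (z : ℤ), if z = y then wgt M x xs * M.p (xs (Fin.last n)) z else 0 from
            tsum_congr fun z => by
              by_cases hz : z = y
              · rw [if_pos ((hQ xs z).mpr ⟨hz, hR⟩), if_pos hz, wgt_snoc]
              · rw [if_neg (fun hc => hz ((hQ xs z).mp hc).1), if_neg hz]]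
          rw [tsum_eq_single y (fun z hz => if_neg hz)]
          rw [if_pos rfl]
        · rw [if_neg hR]
          apply ENNReal.tsum_eq_zero.mpr
          intro z
          exact if_neg (fun hc => hR ((hQ xs z).mp hc).2)
    _ = ∑' (xs : Fin (n+1) → ℤ) (z : ℤ),
          (if QQ n z xs then wgt M x xs * M.p z y else 0) := by
        apply tsum_congr
        intro xs
        by_cases hR : ∀ k : Fin (n+1), 1 ≤ (k:ℕ) → xs k ≠ 0
        · rw [if_pos hR]
          rw [show (∑' (z : ℤ), if QQ n z xs then wgt M x xs * M.p z y else 0)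
              = ∑' (z : ℤ), if xs (Fin.last n) = z then wgt M x xs * M.p z y else 0 from
            tsum_congr fun z => by
              by_cases hz : xs (Fin.last n) = z
              · rw [if_pos ⟨hz, hR⟩, if_pos hz]
              · rw [if_neg (fun hc => hz hc.1), if_neg hz]]
          rw [tsum_eq_single (xs (Fin.last n)) (fun z hz => if_neg (fun hc => hz hc.symm))]
          rw [if_pos rfl]
        · rw [if_neg hR]
          symm
          apply ENNReal.tsum_eq_zero.mpr
          intro z
          exact if_neg (fun hc => hR hc.2)
    _ = ∑' (z : ℤ) (xs : Fin (n+1) → ℤ),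
          (if QQ n z xs then wgt M x xs * M.p z y else 0) := ENNReal.tsum_comm
    _ = ∑' z : ℤ, gg M x n z * M.p z y := by
        apply tsum_congr
        intro z
        rw [gg_eq, ← ENNReal.tsum_mul_right]
        apply tsum_congr
        intro xs
        by_cases h : QQ n z xs
        · rw [if_pos h, if_pos h]
        · rw [if_neg h, if_neg h, zero_mul]

lemma gg_rec_srw (M : MC ℤ) (hp : M.p = srwZ) (x : ℤ) (n : ℕ) (y : ℤ) (hy : y ≠ 0) :
    gg M x (n+1) y = (gg M x n (y-1) + gg M x n (y+1)) / 2 := by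
  rw [gg_rec M x n y hy, hp]
  have key : ∀ z : ℤ, gg M x n z * srwZ z y
      = (if z = y - 1 then gg M x n (y-1) / 2 else 0)
        + (if z = y + 1 then gg M x n (y+1) / 2 else 0) := by
    intro z
    rw [srwZ]
    by_cases h1 : z = y - 1
    · have h2 : ¬ z = y + 1 := by omega
      have hc : y = z + 1 ∨ y = z - 1 := by left; omega
      rw [if_pos hc, if_pos h1, if_neg h2, add_zero, h1, div_eq_mul_inv, div_eq_mul_inv, one_mul]
    · by_cases h2 : z = y + 1
      · have hc : y = z + 1 ∨ y = z - 1 := by right; omega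
        rw [if_pos hc, if_neg h1, if_pos h2, zero_add, h2, div_eq_mul_inv, div_eq_mul_inv, one_mul]
      · have hc : ¬ (y = z + 1 ∨ y = z - 1) := by omega
        rw [if_neg hc, if_neg h1, if_neg h2, mul_zero, add_zero]
  calc (∑' z : ℤ, gg M x n z * srwZ z y)
      = ∑' z : ℤ, ((if z = y - 1 then gg M x n (y-1) / 2 else 0)
          + (if z = y + 1 then gg M x n (y+1) / 2 else 0)) := tsum_congr key
    _ = (∑' z : ℤ, if z = y - 1 then gg M x n (y-1) / 2 else 0)
          + (∑' z : ℤ, if z = y + 1 then gg M x n (y+1) / 2 else 0) := ENNReal.tsum_add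
    _ = gg M x n (y-1) / 2 + gg M x n (y+1) / 2 := by
        rw [tsum_eq_single (y-1) (fun z hz => if_neg hz), if_pos rfl,
            tsum_eq_single (y+1) (fun z hz => if_neg hz), if_pos rfl]
    _ = (gg M x n (y-1) + gg M x n (y+1)) / 2 := by
        rw [ENNReal.div_add_div_same]

noncomputable def GG (M : MC ℤ) (x y : ℤ) : ℝ≥0∞ := ∑' n, gg M x n y

lemma GG_zero (M : MC ℤ) (x : ℤ) : GG M x 0 = if (0:ℤ) = x then 1 else 0 := by
  rw [GG, tsum_eq_single 0 (fun n hn => gg_zero M x n (Nat.one_le_iff_ne_zero.mpr hn))]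
  exact gg_init M x 0

lemma GG_eq (M : MC ℤ) (hp : M.p = srwZ) (x y : ℤ) (hy : y ≠ 0) :
    GG M x y = (if y = x then 1 else 0) + (GG M x (y-1) + GG M x (y+1)) / 2 := by
  have hsplit : GG M x y = gg M x 0 y + ∑' n, gg M x (n+1) y :=
    tsum_eq_zero_add' (f := fun n => gg M x n y) ENNReal.summable
  rw [hsplit, gg_init]
  congr 1
  calc (∑' n, gg M x (n+1) y)
      = ∑' n, (gg M x n (y-1) + gg M x n (y+1)) / 2 :=
        tsum_congr fun n => gg_rec_srw M hp x n y hy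
    _ = ∑' n, (gg M x n (y-1) + gg M x n (y+1)) * 2⁻¹ := by
        simp only [div_eq_mul_inv]
    _ = (∑' n, (gg M x n (y-1) + gg M x n (y+1))) * 2⁻¹ := ENNReal.tsum_mul_right
    _ = (GG M x (y-1) + GG M x (y+1)) / 2 := by
        rw [ENNReal.tsum_add, div_eq_mul_inv, GG, GG]

lemma SS_rec (M : MC ℤ) (hp : M.p = srwZ) (x y : ℤ) (hy : y ≠ 0) (N : ℕ) :
    ∑ n ∈ Finset.range (N+1), gg M x n y
      = (if y = x then 1 else 0) + ((∑ n ∈ Finset.range N, gg M x n (y-1))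
          + (∑ n ∈ Finset.range N, gg M x n (y+1))) / 2 := by
  rw [Finset.sum_range_succ', gg_init, add_comm]
  congr 1
  calc (∑ n ∈ Finset.range N, gg M x (n+1) y)
      = ∑ n ∈ Finset.range N, (gg M x n (y-1) + gg M x n (y+1)) / 2 :=
        Finset.sum_congr rfl fun n _ => gg_rec_srw M hp x n y hy
    _ = ((∑ n ∈ Finset.range N, gg M x n (y-1)) + (∑ n ∈ Finset.range N, gg M x n (y+1))) / 2 := by
        rw [← Finset.sum_add_distrib]
        simp only [div_eq_mul_inv]
        rw [Finset.sum_mul]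

lemma SS_le_GG (M : MC ℤ) (x y : ℤ) (N : ℕ) :
    ∑ n ∈ Finset.range N, gg M x n y ≤ GG M x y := ENNReal.sum_le_tsum _

lemma GG_le_of_SS (M : MC ℤ) (x y : ℤ) (b : ℝ≥0∞)
    (h : ∀ N, ∑ n ∈ Finset.range N, gg M x n y ≤ b) : GG M x y ≤ b := by
  rw [GG, ENNReal.tsum_eq_iSup_sum]
  apply iSup_le
  intro s
  obtain ⟨N, hN⟩ := s.exists_nat_subset_range
  calc ∑ n ∈ s, gg M x n y ≤ ∑ n ∈ Finset.range N, gg M x n y :=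
        Finset.sum_le_sum_of_subset hN
    _ ≤ b := h N

noncomputable def cInd (x y : ℤ) : ℕ := if 0 < x * y then 2 * min x.natAbs y.natAbs else 0

lemma cInd_eq (x y : ℤ) (hy : y ≠ 0) :
    2 * cInd x y = (if y = x then 2 else 0) + (cInd x (y-1) + cInd x (y+1)) := by
  unfold cInd
  have e : ∀ z : ℤ, (0 < x * z) ↔ (0 < x ∧ 0 < z ∨ x < 0 ∧ z < 0) := fun z => mul_pos_iff
  simp only [e]
  split_ifs <;> omega

noncomputable def cE (x y : ℤ) : ℝ≥0∞ := (cInd x y : ℝ≥0∞)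

lemma cE_ne_top (x y : ℤ) : cE x y ≠ ⊤ := ENNReal.natCast_ne_top _

lemma cE_eq (x y : ℤ) (hy : y ≠ 0) :
    cE x y = (if y = x then 1 else 0) + (cE x (y-1) + cE x (y+1)) / 2 := by
  have h := congrArg (fun k : ℕ => (k : ℝ≥0∞)) (cInd_eq x y hy)
  simp only [Nat.cast_mul, Nat.cast_add, Nat.cast_ofNat, apply_ite (Nat.cast : ℕ → ℝ≥0∞),
    Nat.cast_zero] at h
  have h3 : (2:ℝ≥0∞) * ((if y = x then 1 else 0) + (cE x (y-1) + cE x (y+1)) / 2)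
      = (if y = x then (2:ℝ≥0∞) else 0) + (cE x (y-1) + cE x (y+1)) := by
    rw [mul_add, ENNReal.mul_div_cancel two_ne_zero ENNReal.ofNat_ne_top]
    congr 1
    split_ifs <;> simp
  have h4 : (2:ℝ≥0∞) * cE x y
      = 2 * ((if y = x then 1 else 0) + (cE x (y-1) + cE x (y+1)) / 2) := by
    rw [h3]; exact h
  have h2 : (2:ℝ≥0∞) ≠ 0 := two_ne_zero
  have h2t : (2:ℝ≥0∞) ≠ ⊤ := ENNReal.ofNat_ne_top
  exact (ENNReal.mul_right_inj h2 h2t).mp h4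

lemma harmonic_lin (D : ℤ → ℝ) (B : ℝ)
    (heq : ∀ y : ℤ, y ≠ 0 → D (y-1) + D (y+1) = 2 * D y)
    (h0 : D 0 = 0) (hB : ∀ y, |D y| ≤ B) : ∀ y, D y = 0 := by
  have key : ∀ (E : ℤ → ℝ), (∀ y : ℤ, 0 < y → E (y-1) + E (y+1) = 2 * E y) → E 0 = 0 →
      (∀ y : ℤ, |E y| ≤ B) → ∀ n : ℕ, E n = 0 := by
    intro E hE hE0 hEB
    have hlin : ∀ n : ℕ, E n = n * E 1 ∧ E ((n:ℤ)+1) = ((n:ℝ)+1) * E 1 := by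
      intro n
      induction n with
      | zero => constructor <;> simp [hE0]
      | succ m ih =>
        obtain ⟨h1, h2⟩ := ih
        have h := hE ((m:ℤ)+1) (by positivity)
        have e1 : ((m:ℤ)+1) - 1 = (m:ℤ) := by ring
        rw [e1] at h
        rw [h1, h2] at h
        have hc1 : ((m+1 : ℕ) : ℤ) = (m:ℤ)+1 := by push_cast; ring
        have hc2 : ((m+1 : ℕ) : ℝ) = (m:ℝ)+1 := by push_cast; ring
        rw [hc1, hc2]
        exact ⟨h2, by linarith⟩
    have hE1 : E 1 = 0 := by
      by_contra h
      have hd : 0 < |E 1| := abs_pos.mpr h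
      obtain ⟨n, hn⟩ := exists_nat_gt (B / |E 1|)
      have hBn : B < n * |E 1| := by
        rw [div_lt_iff₀ hd] at hn; linarith
      have habs : |E (n:ℤ)| = n * |E 1| := by
        rw [(hlin n).1, abs_mul, Nat.abs_cast]
      have hEBn := hEB (n:ℤ)
      rw [habs] at hEBn
      linarith
    intro n
    rw [(hlin n).1, hE1, mul_zero]
  have hpos : ∀ n : ℕ, D n = 0 :=
    key D (fun y hy => heq y (by omega)) h0 hB
  have hneg : ∀ n : ℕ, D (-(n:ℤ)) = 0 := by
    refine key (fun y => D (-y)) (fun y hy => ?_) (by simpa using h0) (fun y => hB (-y))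
    have h := heq (-y) (by omega)
    show D (-(y-1)) + D (-(y+1)) = 2 * D (-y)
    have e1 : -(y - 1) = -y + 1 := by ring
    have e2 : -(y + 1) = -y - 1 := by ring
    rw [e1, e2]
    linarith
  intro y
  rcases Int.natAbs_eq y with h | h
  · rw [h]; exact hpos _
  · rw [h]; exact hneg _

lemma cE_spec (x y : ℤ) :
    cE x y = if 0 < x * y then 2 * (min x.natAbs y.natAbs : ℝ≥0∞) else 0 := by
  have hmin : ∀ a b : ℕ, ((min a b : ℕ) : ℝ≥0∞) = min (a:ℝ≥0∞) (b:ℝ≥0∞) := by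
    intro a b
    rcases le_total a b with h | h
    · rw [min_eq_left h, min_eq_left (by exact_mod_cast h : (a:ℝ≥0∞) ≤ b)]
    · rw [min_eq_right h, min_eq_right (by exact_mod_cast h : (b:ℝ≥0∞) ≤ a)]
  simp [cE, cInd, apply_ite (Nat.cast : ℕ → ℝ≥0∞), hmin]

lemma cE_zero (x : ℤ) : cE x 0 = 0 := by simp [cE, cInd]

lemma GG_zero' (M : MC ℤ) (x : ℤ) (hx : x ≠ 0) : GG M x 0 = 0 := by
  rw [GG_zero, if_neg (fun h => hx h.symm)]

lemma SS_le_one (M : MC ℤ) (hp : M.p = srwZ) :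
    ∀ (N : ℕ) (y : ℤ), ∑ n ∈ Finset.range N, gg M 0 n y ≤ 1 := by
  intro N
  induction N with
  | zero => intro y; simp
  | succ N ih =>
    intro y
    by_cases hy : y = 0
    · subst hy
      calc ∑ n ∈ Finset.range (N+1), gg M 0 n 0 ≤ GG M 0 0 := SS_le_GG M 0 0 (N+1)
        _ = 1 := by rw [GG_zero]; simp
    · rw [SS_rec M hp 0 y hy N, if_neg hy, zero_add]
      calc ((∑ n ∈ Finset.range N, gg M 0 n (y-1)) + (∑ n ∈ Finset.range N, gg M 0 n (y+1))) / 2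
          ≤ ((1:ℝ≥0∞) + 1) / 2 := by gcongr <;> exact ih _
        _ = 1 := by rw [one_add_one_eq_two, ENNReal.div_self two_ne_zero ENNReal.ofNat_ne_top]

lemma SS_le_c (M : MC ℤ) (hp : M.p = srwZ) (x : ℤ) (hx : x ≠ 0) :
    ∀ (N : ℕ) (y : ℤ), ∑ n ∈ Finset.range N, gg M x n y ≤ cE x y := by
  intro N
  induction N with
  | zero => intro y; simp
  | succ N ih =>
    intro y
    by_cases hy : y = 0
    · subst hy
      calc ∑ n ∈ Finset.range (N+1), gg M x n 0 ≤ GG M x 0 := SS_le_GG M x 0 (N+1)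
        _ = 0 := GG_zero' M x hx
        _ ≤ cE x 0 := zero_le
    · rw [SS_rec M hp x y hy N, cE_eq x y hy]
      gcongr <;> exact ih _

lemma GG_one (M : MC ℤ) (hp : M.p = srwZ) : ∀ y, GG M 0 y = 1 := by
  have hle : ∀ y, GG M 0 y ≤ 1 := fun y => GG_le_of_SS M 0 y 1 (fun N => SS_le_one M hp N y)
  have hfin : ∀ y, GG M 0 y ≠ ⊤ := fun y => (lt_of_le_of_lt (hle y) ENNReal.one_lt_top).ne
  have h00 : GG M 0 0 = 1 := by rw [GG_zero]; simp
  set D : ℤ → ℝ := fun y => 1 - (GG M 0 y).toReal with hD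
  have heq : ∀ y : ℤ, y ≠ 0 → D (y-1) + D (y+1) = 2 * D y := by
    intro y hy
    have h := GG_eq M hp 0 y hy
    rw [if_neg hy, zero_add] at h
    have ht : (GG M 0 y).toReal
        = ((GG M 0 (y-1)).toReal + (GG M 0 (y+1)).toReal) / 2 := by
      rw [h, ENNReal.toReal_div, ENNReal.toReal_add (hfin _) (hfin _)]
      norm_num
    simp only [hD]
    rw [ht]; ring
  have hB : ∀ y, |D y| ≤ 1 := by
    intro y
    have h1 : (GG M 0 y).toReal ≤ 1 := by
      have := ENNReal.toReal_mono ENNReal.one_ne_top (hle y)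
      simpa using this
    have h2 : 0 ≤ (GG M 0 y).toReal := ENNReal.toReal_nonneg
    rw [abs_le]; constructor <;> simp only [hD] <;> nlinarith
  have hzero : ∀ y, D y = 0 := by
    apply harmonic_lin D 1 heq _ hB
    simp only [hD, h00]
    norm_num
  intro y
  have := hzero y
  simp only [hD] at this
  have htr : (GG M 0 y).toReal = 1 := by linarith
  have := congrArg ENNReal.ofReal htr
  rwa [ENNReal.ofReal_toReal (hfin y), ENNReal.ofReal_one] at this

lemma GG_c (M : MC ℤ) (hp : M.p = srwZ) (x : ℤ) (hx : x ≠ 0) : ∀ y, GG M x y = cE x y := by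
  have hle : ∀ y, GG M x y ≤ cE x y :=
    fun y => GG_le_of_SS M x y _ (fun N => SS_le_c M hp x hx N y)
  have hfin : ∀ y, GG M x y ≠ ⊤ := fun y => (lt_of_le_of_lt (hle y) (cE_ne_top x y).lt_top).ne
  set t : ℤ → ℝ := fun y => (GG M x y).toReal with hT
  set c : ℤ → ℝ := fun y => (cE x y).toReal with hC
  set D : ℤ → ℝ := fun y => c y - t y with hD
  have hcb : ∀ y, c y ≤ 2 * (x.natAbs : ℝ) := by
    intro y
    simp only [hC, cE]
    rw [ENNReal.toReal_natCast]
    have : cInd x y ≤ 2 * x.natAbs := by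
      unfold cInd; split_ifs <;> omega
    exact_mod_cast this
  have htc : ∀ y, t y ≤ c y := by
    intro y
    exact ENNReal.toReal_mono (cE_ne_top x y) (hle y)
  have ht0 : ∀ y, 0 ≤ t y := fun y => ENNReal.toReal_nonneg
  have heq : ∀ y : ℤ, y ≠ 0 → D (y-1) + D (y+1) = 2 * D y := by
    intro y hy
    have hg := GG_eq M hp x y hy
    have hc := cE_eq x y hy
    have e : ∀ a b : ℝ≥0∞, a ≠ ⊤ → b ≠ ⊤ →
        (((if y = x then 1 else 0) : ℝ≥0∞) + (a + b) / 2).toReal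
        = (if y = x then (1:ℝ) else 0) + (a.toReal + b.toReal) / 2 := by
      intro a b ha hb
      rw [ENNReal.toReal_add (by split_ifs <;> simp) (by
          apply ne_of_lt
          apply ENNReal.div_lt_top (by rw [ENNReal.add_ne_top]; exact ⟨ha, hb⟩) two_ne_zero),
        ENNReal.toReal_div, ENNReal.toReal_add ha hb]
      split_ifs <;> simp
    have hgr : t y = (if y = x then (1:ℝ) else 0) + (t (y-1) + t (y+1)) / 2 := by
      simp only [hT]
      rw [hg, e _ _ (hfin _) (hfin _)]
    have hcr : c y = (if y = x then (1:ℝ) else 0) + (c (y-1) + c (y+1)) / 2 := by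
      simp only [hC]
      rw [hc, e _ _ (cE_ne_top _ _) (cE_ne_top _ _)]
    simp only [hD]
    rw [hgr, hcr]; ring
  have hB : ∀ y, |D y| ≤ 2 * (x.natAbs : ℝ) := by
    intro y
    rw [abs_le]
    constructor
    · simp only [hD]
      have := htc y; have := ht0 y; have := hcb y
      nlinarith
    · simp only [hD]
      have := htc y; have := ht0 y; have := hcb y
      nlinarith
  have hD0 : D 0 = 0 := by
    simp only [hD, hT, hC]
    rw [GG_zero' M x hx, cE_zero]
    simp
  have hzero := harmonic_lin D (2 * (x.natAbs : ℝ)) heq hD0 hB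
  intro y
  have h1 := hzero y
  simp only [hD] at h1
  have htr : (GG M x y).toReal = (cE x y).toReal := by
    simp only [hT, hC] at h1 ⊢; linarith
  have := congrArg ENNReal.ofReal htr
  rwa [ENNReal.ofReal_toReal (hfin y), ENNReal.ofReal_toReal (cE_ne_top x y)] at this

/-- For the simple symmetric random walk on `ℤ`, the Green function of the walk killed just
before its first positive hitting time of `0` is `G_0(x,y) = 2 · min(|x|,|y|) · 1_{xy > 0}`
for `x ≠ 0`, and `G_0(0,y) = 1` for all `y`. -/
theorem srwZ_green_killed
    (M : MC ℤ) (hp : M.p = srwZ) :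
    (∀ y : ℤ, M.green 0 0 y = 1) ∧
    (∀ x y : ℤ, x ≠ 0 →
      M.green 0 x y = if 0 < x * y then 2 * (min x.natAbs y.natAbs : ℝ≥0∞) else 0) := by
  constructor
  · intro y
    rw [green_eq]
    exact GG_one M hp y
  · intro x y hx
    rw [green_eq]
    have := GG_c M hp x hx y
    rw [GG] at this
    rw [this, cE_spec]
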